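/- arXiv:1612.06270 — 2 statements merged into one kernel-verified Lean document; each statement's English description precedes it below -/
import Mathlib

section
/- Let S be a semitopological semigroup with an identity element, let f ∈ WAP(S), and let K_f denote the closure in the norm topology of C(S) of the convex hull of {r_s f : s ∈ S}. Then the action (s,g) ↦ r_s g of S on K_f is weakly quasi-equicontinuous; that is, if (s_α) is a net in S such that for every g ∈ K_f the net (r_{s_α} g) converges weakly in C(S) to T(g) ∈ K_f, then the map T : K_f → K_f is continuous when K_f carries the weak topology of C(S). -/
open scoped BoundedContinuousFunction

/-- A semitopological semigroup: a semigroup with a topology in which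
multiplication is separately continuous. -/
class SemitopoSemigroup (S : Type*) [Semigroup S] [TopologicalSpace S] : Prop where
  cont_left : ∀ t : S, Continuous fun s : S => t * s
  cont_right : ∀ t : S, Continuous fun s : S => s * t

section Ell

variable {S : Type*}

/-- Left translation: `(l_s f)(t) = f (s * t)`. -/
def lTrans [Mul S] (s : S) (f : S → ℂ) : S → ℂ := fun t => f (s * t)

/-- Right translation: `(r_s f)(t) = f (t * s)`. -/
def rTrans [Mul S] (s : S) (f : S → ℂ) : S → ℂ := fun t => f (t * s)

/-- A bounded complex-valued function, i.e. an element of `ℓ^∞(S)`. -/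
def BddFun (f : S → ℂ) : Prop := ∃ C : ℝ, ∀ t, ‖f t‖ ≤ C

/-- The supremum norm on `ℓ^∞(S)`. -/
noncomputable def supNorm (f : S → ℂ) : ℝ := ⨆ t, ‖f t‖

/-- `X` is a norm-closed linear subspace of `ℓ^∞(S)` containing the constants and
invariant under all left and right translations. -/
structure IsTransInvSubspace [Semigroup S] (X : Set (S → ℂ)) : Prop where
  bdd : ∀ f ∈ X, BddFun f
  add_mem : ∀ f ∈ X, ∀ g ∈ X, f + g ∈ X
  smul_mem : ∀ (c : ℂ), ∀ f ∈ X, c • f ∈ X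
  const_mem : ∀ c : ℂ, (fun _ : S => c) ∈ X
  normClosed : ∀ f : S → ℂ, BddFun f →
    (∀ ε > 0, ∃ g ∈ X, ∀ t, ‖f t - g t‖ ≤ ε) → f ∈ X
  lTrans_mem : ∀ (s : S), ∀ f ∈ X, lTrans s f ∈ X
  rTrans_mem : ∀ (s : S), ∀ f ∈ X, rTrans s f ∈ X

/-- `m` is a left invariant mean on `X`: a linear functional with `‖m‖ = m 1 = 1`
which is invariant under left translations. -/
structure IsLIM [Semigroup S] (X : Set (S → ℂ)) (m : (S → ℂ) → ℂ) : Prop where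
  add : ∀ f ∈ X, ∀ g ∈ X, m (f + g) = m f + m g
  smul : ∀ (c : ℂ), ∀ f ∈ X, m (c • f) = c * m f
  norm_le : ∀ f ∈ X, ‖m f‖ ≤ supNorm f
  map_one : m (fun _ : S => (1 : ℂ)) = 1
  left_inv : ∀ (s : S), ∀ f ∈ X, m (lTrans s f) = m f

/-- `X` has a left invariant mean. -/
def HasLIM [Semigroup S] (X : Set (S → ℂ)) : Prop := ∃ m, IsLIM X m

end Ell

/-- The weak topology on a normed space `E` over `𝕜`. -/
noncomputable def weakTop (𝕜 E : Type*) [NontriviallyNormedField 𝕜] [NormedAddCommGroup E]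
    [NormedSpace 𝕜 E] : TopologicalSpace E :=
  ⨅ φ : E →L[𝕜] 𝕜, TopologicalSpace.induced φ inferInstance

section Semitopo

variable {S : Type*} [Semigroup S] [TopologicalSpace S] [SemitopoSemigroup S]

/-- Left translation as a map on `C(S)`, the bounded continuous functions. -/
noncomputable def lTransB (s : S) (F : S →ᵇ ℂ) : S →ᵇ ℂ :=
  F.compContinuous ⟨fun t => s * t, SemitopoSemigroup.cont_left s⟩

/-- Right translation as a map on `C(S)`, the bounded continuous functions. -/
noncomputable def rTransB (s : S) (F : S →ᵇ ℂ) : S →ᵇ ℂ :=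
  F.compContinuous ⟨fun t => t * s, SemitopoSemigroup.cont_right s⟩

/-- `F ∈ C(S)` is weakly almost periodic: its left orbit is relatively compact in
the weak topology of `C(S)`. -/
def IsWAPb (F : S →ᵇ ℂ) : Prop :=
  @IsCompact _ (weakTop ℂ (S →ᵇ ℂ))
    (@closure _ (weakTop ℂ (S →ᵇ ℂ)) (Set.range fun s => lTransB s F))

/-- `F ∈ C(S)` is almost periodic: its left orbit is relatively compact in
the norm topology of `C(S)`. -/
def IsAPb (F : S →ᵇ ℂ) : Prop :=
  IsCompact (closure (Set.range fun s => lTransB s F))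

/-- `F ∈ C(S)` is left uniformly continuous: `s ↦ l_s F` is norm continuous. -/
def IsLUCb (F : S →ᵇ ℂ) : Prop := Continuous fun s => lTransB s F

/-- `WAP(S)` as a subset of `ℓ^∞(S)`. -/
def WAPset (S : Type*) [Semigroup S] [TopologicalSpace S] [SemitopoSemigroup S] :
    Set (S → ℂ) := {f | ∃ F : S →ᵇ ℂ, ⇑F = f ∧ IsWAPb F}

/-- `AP(S)` as a subset of `ℓ^∞(S)`. -/
def APset (S : Type*) [Semigroup S] [TopologicalSpace S] [SemitopoSemigroup S] :
    Set (S → ℂ) := {f | ∃ F : S →ᵇ ℂ, ⇑F = f ∧ IsAPb F}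

/-- `LUC(S)` as a subset of `ℓ^∞(S)`. -/
def LUCset (S : Type*) [Semigroup S] [TopologicalSpace S] [SemitopoSemigroup S] :
    Set (S → ℂ) := {f | ∃ F : S →ᵇ ℂ, ⇑F = f ∧ IsLUCb F}

end Semitopo

section Action

variable {S : Type*} {E : Type*} [NormedAddCommGroup E] [NormedSpace ℝ E]

/-- `act` is an action of the semigroup `S` on the set `K`. -/
def IsActionOn [Semigroup S] (act : S → E → E) (K : Set E) : Prop :=
  (∀ s : S, Set.MapsTo (act s) K K) ∧
    ∀ s s' : S, ∀ x ∈ K, act s (act s' x) = act (s * s') x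

/-- The action is nonexpansive on `K`. -/
def NonexpansiveOn (act : S → E → E) (K : Set E) : Prop :=
  ∀ s : S, ∀ x ∈ K, ∀ y ∈ K, ‖act s x - act s y‖ ≤ ‖x - y‖

/-- The action is weakly separately continuous on `K`. -/
def WeaklySepContOn [TopologicalSpace S] (act : S → E → E) (K : Set E) : Prop :=
  (∀ s : S, @ContinuousOn E E (weakTop ℝ E) (weakTop ℝ E) (act s) K) ∧
    (∀ x ∈ K, @Continuous S E _ (weakTop ℝ E) fun s => act s x)

/-- The action is jointly weakly continuous on `K`. -/
def JointlyWeaklyContOn [TopologicalSpace S] (act : S → E → E) (K : Set E) : Prop :=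
  @ContinuousOn (S × E) E (@instTopologicalSpaceProd S E _ (weakTop ℝ E)) (weakTop ℝ E)
    (fun p => act p.1 p.2) (Set.univ ×ˢ K)

/-- The action is weakly equicontinuous on `K`: the family `{x ↦ s • x : s ∈ S}` is
equicontinuous for the weak topology on `K`. -/
def WeaklyEquicontOn (act : S → E → E) (K : Set E) : Prop :=
  ∀ x ∈ K, ∀ W ∈ @nhds E (weakTop ℝ E) 0,
    ∃ U ∈ @nhdsWithin E (weakTop ℝ E) x K, ∀ y ∈ U, ∀ s : S, act s y - act s x ∈ W

/-- The action is weakly quasi-equicontinuous on `K`: every map in the closure of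
`{x ↦ s • x : s ∈ S}` in `K^K` (with `K` carrying the weak topology) is continuous. -/
def WeaklyQuasiEquicontOn (act : S → E → E) (K : Set E) : Prop :=
  ∀ T ∈ @closure (↥K → ↥K)
      (@Pi.topologicalSpace ↥K (fun _ => ↥K)
        (fun _ => TopologicalSpace.induced Subtype.val (weakTop ℝ E)))
      {F : ↥K → ↥K | ∃ s : S, ∀ x : ↥K, (F x : E) = act s x},
    @Continuous ↥K ↥K (TopologicalSpace.induced Subtype.val (weakTop ℝ E))
      (TopologicalSpace.induced Subtype.val (weakTop ℝ E)) T

end Action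


/-- Representability as a nonnegative multiple of a difference of elements of `K`. -/
def RepSet {E : Type*} [AddCommGroup E] [Module ℝ E] (K : Set E) (z : E) : Prop :=
  ∃ w : ℝ × E × E, 0 ≤ w.1 ∧ w.2.1 ∈ K ∧ w.2.2 ∈ K ∧ z = w.1 • (w.2.1 - w.2.2)

/-- An affine Lipschitz complex-valued function on a convex set extends to a (weakly
continuous) globally defined continuous-affine function, via Hahn–Banach. -/
theorem exists_affine_extension {E : Type*} [NormedAddCommGroup E] [NormedSpace ℝ E]
    {Kf : Set E} (hKconv : Convex ℝ Kf) {g₀ : E} (hg₀ : g₀ ∈ Kf) (Φ : E → ℂ) (C : ℝ)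
    (haff : ∀ a b : ℝ, 0 ≤ a → 0 ≤ b → a + b = 1 → ∀ x ∈ Kf, ∀ y ∈ Kf,
      Φ (a • x + b • y) = (a : ℂ) * Φ x + (b : ℂ) * Φ y)
    (hlip : ∀ x ∈ Kf, ∀ y ∈ Kf, ‖Φ x - Φ y‖ ≤ C * ‖x - y‖) :
    ∃ ψ1 ψ2 : E →L[ℝ] ℝ, ∀ x ∈ Kf,
      Φ x = Φ g₀ + ((ψ1 x - ψ1 g₀ : ℝ) : ℂ) + ((ψ2 x - ψ2 g₀ : ℝ) : ℂ) * Complex.I := by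
  classical
  -- the key well-definedness fact
  have hwd : ∀ t u : ℝ, 0 ≤ t → 0 ≤ u → ∀ x ∈ Kf, ∀ y ∈ Kf, ∀ x' ∈ Kf, ∀ y' ∈ Kf,
      t • (x - y) = u • (x' - y') → (t : ℂ) * (Φ x - Φ y) = (u : ℂ) * (Φ x' - Φ y') := by
    intro t u ht hu x hx y hy x' hx' y' hy' heq
    rcases ht.eq_or_lt with h0 | ht'
    · have hz : u • (x' - y') = 0 := by rw [← heq, ← h0, zero_smul]
      rcases smul_eq_zero.mp hz with h | h
      · rw [← h0, h]; simp
      · rw [← h0, sub_eq_zero.mp h]; simp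
    rcases hu.eq_or_lt with h0 | hu'
    · have hz : t • (x - y) = 0 := by rw [heq, ← h0, zero_smul]
      rcases smul_eq_zero.mp hz with h | h
      · exact absurd h ht'.ne'
      · rw [← h0, sub_eq_zero.mp h]; simp
    · have hσ : (0:ℝ) < t + u := by linarith
      have hne : t + u ≠ 0 := ne_of_gt hσ
      have hmix : (t / (t+u)) • x + (u / (t+u)) • y' = (u / (t+u)) • x' + (t / (t+u)) • y := by
        have h1 : t • x + u • y' = u • x' + t • y := by
          rw [smul_sub, smul_sub] at heq
          exact sub_eq_sub_iff_add_eq_add.mp heq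
        have h2 := congrArg (fun z => (t+u)⁻¹ • z) h1
        simpa [smul_add, smul_smul, div_eq_inv_mul] using h2
      have hab : t/(t+u) + u/(t+u) = 1 := by rw [← add_div, div_self hne]
      have hba : u/(t+u) + t/(t+u) = 1 := by rw [← add_div, add_comm u t, div_self hne]
      have e1 := haff _ _ (div_nonneg ht hσ.le) (div_nonneg hu hσ.le) hab x hx y' hy'
      have e2 := haff _ _ (div_nonneg hu hσ.le) (div_nonneg ht hσ.le) hba x' hx' y hy
      have e3 : Φ ((t/(t+u)) • x + (u/(t+u)) • y') = Φ ((u/(t+u)) • x' + (t/(t+u)) • y) := by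
        rw [hmix]
      rw [e1, e2] at e3
      have hσℂ : (t:ℂ) + u ≠ 0 := by
        intro h
        apply hne
        exact_mod_cast congrArg Complex.re h
      push_cast at e3
      field_simp at e3
      linear_combination e3
  -- the homogeneous part, defined by choice
  set q : E → ℂ := fun z =>
    if h : RepSet Kf z then (h.choose.1 : ℂ) * (Φ h.choose.2.1 - Φ h.choose.2.2) else 0
    with hqdef
  have hq : ∀ (t : ℝ) (x y z : E), 0 ≤ t → x ∈ Kf → y ∈ Kf → z = t • (x - y) →
      q z = (t:ℂ) * (Φ x - Φ y) := by
    intro t x y z ht hx hy hz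
    have hPz : RepSet Kf z := ⟨(t, x, y), ht, hx, hy, hz⟩
    rw [hqdef]
    simp only [dif_pos hPz]
    obtain ⟨h1, h2, h3, h4⟩ := hPz.choose_spec
    exact hwd _ _ h1 ht _ h2 _ h3 _ hx _ hy (by rw [← h4, hz])
  have hq0 : q 0 = 0 := by
    rw [hq 0 g₀ g₀ 0 le_rfl hg₀ hg₀ (by simp)]; simp
  have hq_add : ∀ z w, RepSet Kf z → RepSet Kf w → q (z + w) = q z + q w := by
    intro z w hz hw
    obtain ⟨⟨t, a, b⟩, ht, ha, hb, hze⟩ := hz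
    obtain ⟨⟨u, c, d⟩, hu, hc, hd, hwe⟩ := hw
    rcases (by positivity : (0:ℝ) ≤ t + u).eq_or_lt with hσ | hσ
    · have ht0 : t = 0 := by linarith
      have hu0 : u = 0 := by linarith
      have hz0 : z = 0 := by rw [hze, ht0, zero_smul]
      have hw0 : w = 0 := by rw [hwe, hu0, zero_smul]
      simp [hz0, hw0, hq0]
    · have hne : t + u ≠ 0 := ne_of_gt hσ
      have hab : t/(t+u) + u/(t+u) = 1 := by rw [← add_div, div_self hne]
      have hmemA : (t/(t+u)) • a + (u/(t+u)) • c ∈ Kf :=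
        hKconv ha hc (div_nonneg ht hσ.le) (div_nonneg hu hσ.le) hab
      have hmemB : (t/(t+u)) • b + (u/(t+u)) • d ∈ Kf :=
        hKconv hb hd (div_nonneg ht hσ.le) (div_nonneg hu hσ.le) hab
      have hrep : z + w = (t+u) • (((t/(t+u)) • a + (u/(t+u)) • c)
          - ((t/(t+u)) • b + (u/(t+u)) • d)) := by
        rw [hze, hwe]
        match_scalars <;> field_simp <;> ring
      rw [hq _ _ _ _ hσ.le hmemA hmemB hrep, hq t a b z ht ha hb hze,
        hq u c d w hu hc hd hwe,
        haff _ _ (div_nonneg ht hσ.le) (div_nonneg hu hσ.le) hab a ha c hc,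
        haff _ _ (div_nonneg ht hσ.le) (div_nonneg hu hσ.le) hab b hb d hd]
      have hσℂ : (t:ℂ) + u ≠ 0 := by
        intro h; apply hne; exact_mod_cast congrArg Complex.re h
      push_cast
      field_simp
      ring
  have hq_smul : ∀ (c : ℝ) z, RepSet Kf z → q (c • z) = (c:ℂ) * q z := by
    intro c z hz
    obtain ⟨⟨t, a, b⟩, ht, ha, hb, hze⟩ := hz
    rw [hq t a b z ht ha hb hze]
    rcases le_or_gt 0 c with hc | hc
    · rw [hq (c*t) a b (c • z) (mul_nonneg hc ht) ha hb (by rw [hze, smul_smul])]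
      push_cast; ring
    · rw [hq ((-c)*t) b a (c • z) (mul_nonneg (by linarith) ht) hb ha
        (by rw [hze]; match_scalars <;> ring)]
      push_cast; ring
  have hq_bound : ∀ z, RepSet Kf z → ‖q z‖ ≤ C * ‖z‖ := by
    intro z hz
    obtain ⟨⟨t, a, b⟩, ht, ha, hb, hze⟩ := hz
    rw [hq t a b z ht ha hb hze, hze, norm_mul, norm_smul]
    have h1 : ‖(t:ℂ)‖ = t := by
      rw [Complex.norm_real, Real.norm_eq_abs, abs_of_nonneg ht]
    have h2 : ‖t‖ = t := by rw [Real.norm_eq_abs, abs_of_nonneg ht]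
    rw [h1, h2]
    calc t * ‖Φ a - Φ b‖ ≤ t * (C * ‖a - b‖) := by
          apply mul_le_mul_of_nonneg_left (hlip a ha b hb) ht
      _ = C * (t * ‖a - b‖) := by ring
  -- the submodule of representable elements
  let p : Submodule ℝ E :=
    { carrier := {z | RepSet Kf z}
      add_mem' := by
        intro z w hz hw
        obtain ⟨⟨t, a, b⟩, ht, ha, hb, hze⟩ := hz
        obtain ⟨⟨u, c, d⟩, hu, hc, hd, hwe⟩ := hw
        rcases (by positivity : (0:ℝ) ≤ t + u).eq_or_lt with hσ | hσ
        · refine ⟨(0, g₀, g₀), le_rfl, hg₀, hg₀, ?_⟩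
          have ht0 : t = 0 := by linarith
          have hu0 : u = 0 := by linarith
          simp [hze, hwe, ht0, hu0]
        · have hne : t + u ≠ 0 := ne_of_gt hσ
          have hab : t/(t+u) + u/(t+u) = 1 := by rw [← add_div, div_self hne]
          refine ⟨(t+u, (t/(t+u)) • a + (u/(t+u)) • c, (t/(t+u)) • b + (u/(t+u)) • d),
            hσ.le, hKconv ha hc (div_nonneg ht hσ.le) (div_nonneg hu hσ.le) hab,
            hKconv hb hd (div_nonneg ht hσ.le) (div_nonneg hu hσ.le) hab, ?_⟩
          rw [hze, hwe]
          match_scalars <;> field_simp <;> ring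
      zero_mem' := ⟨(0, g₀, g₀), le_rfl, hg₀, hg₀, by simp⟩
      smul_mem' := by
        intro c z hz
        obtain ⟨⟨t, a, b⟩, ht, ha, hb, hze⟩ := hz
        rcases le_or_gt 0 c with hc | hc
        · exact ⟨(c*t, a, b), mul_nonneg hc ht, ha, hb, by rw [hze, smul_smul]⟩
        · exact ⟨((-c)*t, b, a), mul_nonneg (by linarith) ht, hb, ha,
            by rw [hze]; match_scalars <;> ring⟩ }
  have hmemP : ∀ z, RepSet Kf z → z ∈ p := fun z hz => hz
  -- real and imaginary parts as continuous linear functionals on p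
  let Lre : p →ₗ[ℝ] ℝ :=
    { toFun := fun z => (q z.1).re
      map_add' := by
        intro z w
        show (q ((z : E) + (w : E))).re = (q (z : E)).re + (q (w : E)).re
        rw [hq_add _ _ z.2 w.2, Complex.add_re]
      map_smul' := by
        intro c z
        show (q (c • (z : E))).re = c * (q (z : E)).re
        rw [hq_smul c _ z.2]
        simp [Complex.mul_re] }
  let Lim : p →ₗ[ℝ] ℝ :=
    { toFun := fun z => (q z.1).im
      map_add' := by
        intro z w
        show (q ((z : E) + (w : E))).im = (q (z : E)).im + (q (w : E)).im
        rw [hq_add _ _ z.2 w.2, Complex.add_im]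
      map_smul' := by
        intro c z
        show (q (c • (z : E))).im = c * (q (z : E)).im
        rw [hq_smul c _ z.2]
        simp [Complex.mul_im] }
  have hbre : ∀ z : p, ‖Lre z‖ ≤ C * ‖z‖ := by
    intro z
    calc ‖(q z.1).re‖ ≤ ‖q z.1‖ := by
          rw [Real.norm_eq_abs]; exact Complex.abs_re_le_norm _
      _ ≤ C * ‖z.1‖ := hq_bound _ z.2
  have hbim : ∀ z : p, ‖Lim z‖ ≤ C * ‖z‖ := by
    intro z
    calc ‖(q z.1).im‖ ≤ ‖q z.1‖ := by
          rw [Real.norm_eq_abs]; exact Complex.abs_im_le_norm _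
      _ ≤ C * ‖z.1‖ := hq_bound _ z.2
  obtain ⟨ψ1, hψ1, -⟩ := exists_extension_norm_eq p (Lre.mkContinuous C hbre)
  obtain ⟨ψ2, hψ2, -⟩ := exists_extension_norm_eq p (Lim.mkContinuous C hbim)
  refine ⟨ψ1, ψ2, fun x hx => ?_⟩
  have hmem : x - g₀ ∈ p := ⟨(1, x, g₀), zero_le_one, hx, hg₀, (one_smul ℝ _).symm⟩
  have hqx : q (x - g₀) = Φ x - Φ g₀ := by
    rw [hq 1 x g₀ (x - g₀) zero_le_one hx hg₀ (one_smul ℝ _).symm]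
    push_cast; ring
  have h1 : ψ1 x - ψ1 g₀ = (Φ x - Φ g₀).re := by
    rw [← map_sub, hψ1 ⟨x - g₀, hmem⟩]
    show (q (x - g₀)).re = _
    rw [hqx]
  have h2 : ψ2 x - ψ2 g₀ = (Φ x - Φ g₀).im := by
    rw [← map_sub, hψ2 ⟨x - g₀, hmem⟩]
    show (q (x - g₀)).im = _
    rw [hqx]
  rw [h1, h2, add_assoc, Complex.re_add_im]
  ring

/-- for a semitopological semigroup `S` with identity and `f ∈ WAP(S)`,
the action `(s, g) ↦ r_s g` of `S` on `K_f` (the norm closure of the convex hull of the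
right orbit of `f` in `C(S)`) is weakly quasi-equicontinuous: if `(s_α)` is a net in `S`
such that `r_{s_α} g` converges weakly to `T g ∈ K_f` for every `g ∈ K_f`, then
`T : K_f → K_f` is weakly continuous. -/
theorem wap_right_orbit_action_quasi_equicontinuous (S : Type*) [Monoid S]
    [TopologicalSpace S] [T2Space S] [SemitopoSemigroup S] (F : S →ᵇ ℂ) (hF : IsWAPb F)
    (Kf : Set (S →ᵇ ℂ))
    (hKf : Kf = closure (convexHull ℝ (Set.range fun s : S => rTransB s F)))
    (ι : Type*) (l : Filter ι) (hl : l.NeBot) (sα : ι → S)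
    (T : (S →ᵇ ℂ) → (S →ᵇ ℂ)) (hT : ∀ g ∈ Kf, T g ∈ Kf)
    (hconv : ∀ g ∈ Kf, Filter.Tendsto (fun i => rTransB (sα i) g) l
      (@nhds _ (weakTop ℂ (S →ᵇ ℂ)) (T g))) :
    @ContinuousOn _ _ (weakTop ℂ (S →ᵇ ℂ)) (weakTop ℂ (S →ᵇ ℂ)) T Kf := by
  classical
  have hKconv : Convex ℝ Kf := by
    rw [hKf]; exact (convex_convexHull ℝ _).closure
  have hg₀ : rTransB (1 : S) F ∈ Kf := by
    rw [hKf]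
    exact subset_closure (subset_convexHull ℝ _ ⟨1, rfl⟩)
  intro g hg
  show Filter.Tendsto T (@nhdsWithin _ (weakTop ℂ (S →ᵇ ℂ)) g Kf)
    (@nhds _ (weakTop ℂ (S →ᵇ ℂ)) (T g))
  rw [show (weakTop ℂ (S →ᵇ ℂ)) =
      ⨅ φ : (S →ᵇ ℂ) →L[ℂ] ℂ, TopologicalSpace.induced φ inferInstance from rfl,
    @nhds_iInf, Filter.tendsto_iInf]
  intro φ
  rw [nhds_induced, Filter.tendsto_comap_iff]
  -- the scalar function `Φ = φ ∘ T`
  set Φ : (S →ᵇ ℂ) → ℂ := fun x => φ (T x) with hΦdef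
  have hφc : @Continuous _ _ (weakTop ℂ (S →ᵇ ℂ)) _ φ := by
    show @Continuous _ _
      (⨅ χ : (S →ᵇ ℂ) →L[ℂ] ℂ, TopologicalSpace.induced χ inferInstance) _ φ
    exact continuous_iInf_dom continuous_induced_dom
  have hΦlim : ∀ x ∈ Kf, Filter.Tendsto (fun i => φ (rTransB (sα i) x)) l (nhds (Φ x)) := by
    intro x hx
    exact (@Continuous.tendsto _ _ (weakTop ℂ (S →ᵇ ℂ)) _ _ hφc (T x)).comp (hconv x hx)
  -- scalar affinity of Φ on Kf
  have haff : ∀ a b : ℝ, 0 ≤ a → 0 ≤ b → a + b = 1 → ∀ x ∈ Kf, ∀ y ∈ Kf,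
      Φ (a • x + b • y) = (a : ℂ) * Φ x + (b : ℂ) * Φ y := by
    intro a b ha hb hab x hx y hy
    have hmem : a • x + b • y ∈ Kf := hKconv hx hy ha hb hab
    have h2 : Filter.Tendsto (fun i => φ (rTransB (sα i) (a • x + b • y))) l
        (nhds ((a:ℂ) * Φ x + (b:ℂ) * Φ y)) := by
      have heq : (fun i => φ (rTransB (sα i) (a • x + b • y)))
          = fun i => (a:ℂ) * φ (rTransB (sα i) x) + (b:ℂ) * φ (rTransB (sα i) y) := by
        funext i
        have hr : rTransB (sα i) (a • x + b • y)
            = a • rTransB (sα i) x + b • rTransB (sα i) y := by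
          ext t; simp [rTransB]
        rw [hr, map_add, φ.map_smul_of_tower, φ.map_smul_of_tower,
          Complex.real_smul, Complex.real_smul]
      rw [heq]
      exact ((hΦlim x hx).const_mul _).add ((hΦlim y hy).const_mul _)
    exact tendsto_nhds_unique (hΦlim _ hmem) h2
  -- Lipschitz property of Φ on Kf
  have hlip : ∀ x ∈ Kf, ∀ y ∈ Kf, ‖Φ x - Φ y‖ ≤ ‖φ‖ * ‖x - y‖ := by
    intro x hx y hy
    have h : Filter.Tendsto (fun i => ‖φ (rTransB (sα i) x) - φ (rTransB (sα i) y)‖) l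
        (nhds ‖Φ x - Φ y‖) := ((hΦlim x hx).sub (hΦlim y hy)).norm
    refine le_of_tendsto h (Filter.Eventually.of_forall fun i => ?_)
    have hsub : rTransB (sα i) x - rTransB (sα i) y = rTransB (sα i) (x - y) := by
      ext t; simp [rTransB]
    rw [← map_sub, hsub]
    calc ‖φ (rTransB (sα i) (x - y))‖ ≤ ‖φ‖ * ‖rTransB (sα i) (x - y)‖ := φ.le_opNorm _
      _ ≤ ‖φ‖ * ‖x - y‖ := by
          gcongr
          exact BoundedContinuousFunction.norm_compContinuous_le _ _
  -- extend the affine map via Hahn–Banach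
  obtain ⟨ψ1, ψ2, hA⟩ := exists_affine_extension hKconv hg₀ Φ ‖φ‖ haff hlip
  set g₀ := rTransB (1 : S) F
  set A : (S →ᵇ ℂ) → ℂ := fun x =>
    Φ g₀ + ((ψ1 x - ψ1 g₀ : ℝ) : ℂ) + ((ψ2 x - ψ2 g₀ : ℝ) : ℂ) * Complex.I with hAdef
  -- A is weakly continuous
  have hψc : ∀ ψ : (S →ᵇ ℂ) →L[ℝ] ℝ,
      @Continuous _ _ (weakTop ℂ (S →ᵇ ℂ)) _ fun x => ψ x := by
    intro ψ
    have h1 : @Continuous _ _ (weakTop ℂ (S →ᵇ ℂ)) _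
        (ψ.extendTo𝕜' : (S →ᵇ ℂ) →L[ℂ] ℂ) := by
      show @Continuous _ _
        (⨅ χ : (S →ᵇ ℂ) →L[ℂ] ℂ, TopologicalSpace.induced χ inferInstance) _ _
      exact continuous_iInf_dom continuous_induced_dom
    have h2 : (fun x => ψ x) = fun x => ((ψ.extendTo𝕜' : (S →ᵇ ℂ) →L[ℂ] ℂ) x).re := by
      funext x
      exact (StrongDual.re_extendRCLike_apply (𝕜 := ℂ) ψ x).symm
    rw [h2]
    exact @Continuous.comp _ _ _ (weakTop ℂ (S →ᵇ ℂ)) _ _ _ _ Complex.continuous_re h1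
  have hconst : ∀ c : ℂ, @Continuous _ _ (weakTop ℂ (S →ᵇ ℂ)) _ (fun _ => c) :=
    fun c => @continuous_const _ _ (weakTop ℂ (S →ᵇ ℂ)) _ c
  have hadd : ∀ f g : (S →ᵇ ℂ) → ℂ, @Continuous _ _ (weakTop ℂ (S →ᵇ ℂ)) _ f →
      @Continuous _ _ (weakTop ℂ (S →ᵇ ℂ)) _ g →
      @Continuous _ _ (weakTop ℂ (S →ᵇ ℂ)) _ (fun x => f x + g x) :=
    fun f g hf hg => by letI := weakTop ℂ (S →ᵇ ℂ); exact Continuous.add hf hg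
  have hsubc : ∀ f g : (S →ᵇ ℂ) → ℂ, @Continuous _ _ (weakTop ℂ (S →ᵇ ℂ)) _ f →
      @Continuous _ _ (weakTop ℂ (S →ᵇ ℂ)) _ g →
      @Continuous _ _ (weakTop ℂ (S →ᵇ ℂ)) _ (fun x => f x - g x) :=
    fun f g hf hg => by letI := weakTop ℂ (S →ᵇ ℂ); exact Continuous.sub hf hg
  have hmulc : ∀ f g : (S →ᵇ ℂ) → ℂ, @Continuous _ _ (weakTop ℂ (S →ᵇ ℂ)) _ f →
      @Continuous _ _ (weakTop ℂ (S →ᵇ ℂ)) _ g →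
      @Continuous _ _ (weakTop ℂ (S →ᵇ ℂ)) _ (fun x => f x * g x) :=
    fun f g hf hg => by letI := weakTop ℂ (S →ᵇ ℂ); exact Continuous.mul hf hg
  have hk1 : @Continuous _ _ (weakTop ℂ (S →ᵇ ℂ)) _ (fun x => ((ψ1 x : ℝ) : ℂ)) :=
    @Continuous.comp _ _ _ (weakTop ℂ (S →ᵇ ℂ)) _ _ _ _ Complex.continuous_ofReal (hψc ψ1)
  have hk2 : @Continuous _ _ (weakTop ℂ (S →ᵇ ℂ)) _ (fun x => ((ψ2 x : ℝ) : ℂ)) :=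
    @Continuous.comp _ _ _ (weakTop ℂ (S →ᵇ ℂ)) _ _ _ _ Complex.continuous_ofReal (hψc ψ2)
  have hAcont : @Continuous _ _ (weakTop ℂ (S →ᵇ ℂ)) _ A := by
    rw [hAdef]
    have e : (fun x => Φ g₀ + ((ψ1 x - ψ1 g₀ : ℝ) : ℂ) + ((ψ2 x - ψ2 g₀ : ℝ) : ℂ) * Complex.I)
        = fun x => (Φ g₀ + (((ψ1 x : ℝ) : ℂ) - ((ψ1 g₀ : ℝ) : ℂ)))
            + (((ψ2 x : ℝ) : ℂ) - ((ψ2 g₀ : ℝ) : ℂ)) * Complex.I := by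
      funext x; push_cast; ring
    rw [e]
    exact hadd _ _
      (hadd (fun _ => Φ g₀) _ (hconst _) (hsubc _ (fun _ => ((ψ1 g₀ : ℝ) : ℂ)) hk1 (hconst _)))
      (hmulc _ (fun _ => Complex.I) (hsubc _ (fun _ => ((ψ2 g₀ : ℝ) : ℂ)) hk2 (hconst _))
        (hconst _))
  -- conclude
  have hTend : Filter.Tendsto A (@nhdsWithin _ (weakTop ℂ (S →ᵇ ℂ)) g Kf) (nhds (A g)) :=
    (@Continuous.tendsto _ _ (weakTop ℂ (S →ᵇ ℂ)) _ _ hAcont g).mono_left (@nhdsWithin_le_nhds _ (weakTop ℂ (S →ᵇ ℂ)) g Kf)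
  have heqv : A =ᶠ[@nhdsWithin _ (weakTop ℂ (S →ᵇ ℂ)) g Kf] (⇑φ ∘ T) := by
    filter_upwards [@self_mem_nhdsWithin _ (weakTop ℂ (S →ᵇ ℂ)) g Kf] with x hx
    exact (hA x hx).symm
  have hAg : A g = φ (T g) := (hA g hg).symm
  exact hAg ▸ Filter.Tendsto.congr' heqv hTend
end

section
/- Let S be a semitopological semigroup with an identity element, let f ∈ AP(S), and let K_f denote the closure in the norm topology of C(S) of the convex hull of {r_s f : s ∈ S}. Then K_f is norm-compact, r_s(K_f) ⊆ K_f for every s ∈ S, and the map S × K_f → K_f, (s,g) ↦ r_s g, defines a left action of S on K_f which is nonexpansive, weakly separately continuous, and weakly equicontinuous (the family {g ↦ r_s g : s ∈ S} is equicontinuous with respect to the weak topology of C(S) restricted to K_f). -/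
open scoped BoundedContinuousFunction

section MyAux

open BoundedContinuousFunction Filter

variable {S' : Type*} [Semigroup S'] [TopologicalSpace S'] [SemitopoSemigroup S']

lemma myRTransB_apply (s : S') (F : S' →ᵇ ℂ) (t : S') : rTransB s F t = F (t * s) := rfl

lemma myLTransB_apply (s : S') (F : S' →ᵇ ℂ) (t : S') : lTransB s F t = F (s * t) := rfl

lemma myRTransB_comp (s s' : S') (F : S' →ᵇ ℂ) :
    rTransB s' (rTransB s F) = rTransB (s' * s) F := by
  ext t
  simp [myRTransB_apply, mul_assoc]

lemma myNorm_rTransB_sub (s : S') (g h : S' →ᵇ ℂ) :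
    ‖rTransB s g - rTransB s h‖ ≤ ‖g - h‖ := by
  refine (BoundedContinuousFunction.norm_le (norm_nonneg _)).2 fun t => ?_
  have h1 : (rTransB s g - rTransB s h) t = (g - h) (t * s) := by
    simp [myRTransB_apply]
  rw [h1]
  exact BoundedContinuousFunction.norm_coe_le_norm _ _

lemma myContinuous_rTransB (s : S') : Continuous (rTransB s : (S' →ᵇ ℂ) → (S' →ᵇ ℂ)) := by
  refine (LipschitzWith.of_dist_le_mul (K := 1) fun g h => ?_).continuous
  rw [NNReal.coe_one, one_mul, dist_eq_norm, dist_eq_norm]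
  exact myNorm_rTransB_sub s g h

/-- Right translation as a real-linear map on `C(S)`. -/
noncomputable def myRTransL (s : S') : (S' →ᵇ ℂ) →ₗ[ℝ] (S' →ᵇ ℂ) where
  toFun := rTransB s
  map_add' g h := by ext t; simp [myRTransB_apply]
  map_smul' c g := by ext t; simp [myRTransB_apply]

/-- The norm topology is finer than the weak topology. -/
lemma myNorm_le_weakTop (𝕜 E : Type*) [NontriviallyNormedField 𝕜] [NormedAddCommGroup E]
    [NormedSpace 𝕜 E] : (inferInstance : TopologicalSpace E) ≤ weakTop 𝕜 E :=
  le_iInf fun φ => continuous_iff_le_induced.mp φ.continuous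

/-- The weak topology on `C(S)` is Hausdorff (point evaluations separate points). -/
lemma myWeakTop_t2 : @T2Space (S' →ᵇ ℂ) (weakTop ℂ (S' →ᵇ ℂ)) := by
  letI := weakTop ℂ (S' →ᵇ ℂ)
  constructor
  intro x y hxy
  obtain ⟨t, ht⟩ : ∃ t, x t ≠ y t := by
    by_contra h
    push_neg at h
    exact hxy (BoundedContinuousFunction.ext h)
  have hc : Continuous fun g : S' →ᵇ ℂ => BoundedContinuousFunction.evalCLM ℂ t g :=
    continuous_iff_le_induced.mpr (iInf_le _ (BoundedContinuousFunction.evalCLM ℂ t))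
  exact separated_by_continuous hc ht

/-- The topology of pointwise convergence on `C(S)`. -/
noncomputable def myPtTop (S : Type*) [TopologicalSpace S] : TopologicalSpace (S →ᵇ ℂ) :=
  TopologicalSpace.induced (fun F : S →ᵇ ℂ => (F : S → ℂ)) Pi.topologicalSpace

lemma myNorm_le_ptTop (S : Type*) [TopologicalSpace S] :
    (inferInstance : TopologicalSpace (S →ᵇ ℂ)) ≤ myPtTop S := by
  refine continuous_iff_le_induced.mp (continuous_pi fun t => ?_)
  exact (BoundedContinuousFunction.evalCLM ℂ t).continuous

lemma myPtTop_t2 (S : Type*) [TopologicalSpace S] : @T2Space (S →ᵇ ℂ) (myPtTop S) := by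
  letI := myPtTop S
  exact T2Space.of_injective_continuous
    (fun f g h => BoundedContinuousFunction.ext fun t => congrFun h t)
    continuous_induced_dom

/-- On a compact set, any coarser Hausdorff topology induces the same neighborhood
filters within the set. -/
lemma myNhdsWithin_eq_of_compact {E : Type*} (t₁ t₂ : TopologicalSpace E)
    (hle : t₁ ≤ t₂) (ht2 : @T2Space E t₂)
    {K : Set E} (hK : @IsCompact E t₁ K) (x : E) :
    @nhdsWithin E t₂ x K = @nhdsWithin E t₁ x K := by
  refine le_antisymm ?_ ?_
  · -- every t₁-neighborhood within K is a t₂-neighborhood within K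
    intro s hs
    rw [@mem_nhdsWithin E t₁] at hs
    obtain ⟨U, hUopen, hxU, hUK⟩ := hs
    have hC : @IsCompact E t₁ (K \ U) := @IsCompact.diff E t₁ K U hK hUopen
    have hC2 : @IsCompact E t₂ (K \ U) := by
      have := @IsCompact.image E E t₁ t₂ _ id hC (@continuous_id_of_le E t₁ t₂ hle)
      rwa [Set.image_id] at this
    have hCcl : @IsClosed E t₂ (K \ U) := @IsCompact.isClosed E t₂ ht2 _ hC2
    rw [@mem_nhdsWithin E t₂]
    refine ⟨(K \ U)ᶜ, @IsClosed.isOpen_compl E t₂ _ hCcl, fun h => h.2 hxU, fun y hy => ?_⟩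
    exact hUK ⟨by_contra fun hyU => hy.1 ⟨hy.2, hyU⟩, hy.2⟩
  · exact inf_le_inf_right _ (@nhds_mono E t₁ t₂ x hle)

end MyAux

section MyTB

open BoundedContinuousFunction Filter Set

variable {S' : Type*} [Semigroup S'] [TopologicalSpace S'] [SemitopoSemigroup S']

/-- If `F` is almost periodic then its right orbit is totally bounded in norm. -/
lemma myRightOrbit_totallyBounded (F : S' →ᵇ ℂ) (hF : IsAPb F) :
    TotallyBounded (Set.range fun s : S' => rTransB s F) := by
  rw [Metric.totallyBounded_iff]
  intro ε hε
  have hL : TotallyBounded (Set.range fun s : S' => lTransB s F) :=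
    hF.totallyBounded.subset subset_closure
  obtain ⟨T, hTfin, hTcov⟩ := Metric.totallyBounded_iff.mp hL (ε / 4) (by positivity)
  haveI : Fintype T := hTfin.fintype
  -- the finite-dimensional "fingerprint" map
  set Ψ : S' → (T → ℂ) := fun u G => (G : S' →ᵇ ℂ) u with hΨdef
  -- its range is bounded, hence totally bounded
  obtain ⟨C, hC⟩ : ∃ C : ℝ, ∀ G ∈ T, ‖G‖ ≤ C := by
    rcases (hTfin.image norm).bddAbove with ⟨C, hC⟩
    exact ⟨C, fun G hG => hC (Set.mem_image_of_mem _ hG)⟩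
  have hbdd : Bornology.IsBounded (Set.range Ψ) := by
    refine (Metric.isBounded_closedBall (x := (0 : T → ℂ)) (r := max C 0)).subset ?_
    rintro _ ⟨u, rfl⟩
    rw [Metric.mem_closedBall, dist_zero_right]
    refine (pi_norm_le_iff_of_nonneg (le_max_right C 0)).2 fun G => ?_
    exact le_trans (le_trans (BoundedContinuousFunction.norm_coe_le_norm _ u)
      (hC G G.2)) (le_max_left C 0)
  have htb : TotallyBounded (Set.range Ψ) :=
    ((Metric.isCompact_of_isClosed_isBounded isClosed_closure
      hbdd.closure).totallyBounded).subset subset_closure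
  obtain ⟨t, hts, htfin, htcov⟩ := totallyBounded_iff_subset.mp htb
    {p | dist p.1 p.2 < ε / 4} (Metric.dist_mem_uniformity (by positivity))
  choose uu huu using fun y (hy : y ∈ t) => hts hy
  haveI := htfin.to_subtype
  refine ⟨(fun y : {y // y ∈ t} => rTransB (uu y.1 y.2) F) '' Set.univ,
    Set.finite_univ.image _, ?_⟩
  rintro _ ⟨u, rfl⟩
  have : Ψ u ∈ ⋃ y ∈ t, {x | (x, y) ∈ {p : (T → ℂ) × (T → ℂ) | dist p.1 p.2 < ε / 4}} :=
    htcov ⟨u, rfl⟩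
  rw [Set.mem_iUnion₂] at this
  obtain ⟨y, hy, hdy⟩ := this
  have hyΨ : Ψ (uu y hy) = y := huu y hy
  rw [Set.mem_iUnion₂]
  refine ⟨rTransB (uu y hy) F, ⟨⟨y, hy⟩, Set.mem_univ _, rfl⟩, ?_⟩
  rw [Metric.mem_ball, dist_eq_norm]
  have hle : ‖rTransB u F - rTransB (uu y hy) F‖ ≤ ε / 4 + ε / 4 + ε / 4 := by
    refine (BoundedContinuousFunction.norm_le (by positivity)).2 fun x => ?_
    -- pick an element of the ε/4-net close to the left translate l_x F
    have hx : lTransB x F ∈ ⋃ G ∈ T, Metric.ball G (ε / 4) := hTcov ⟨x, rfl⟩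
    rw [Set.mem_iUnion₂] at hx
    obtain ⟨G, hG, hGx⟩ := hx
    rw [Metric.mem_ball, dist_eq_norm] at hGx
    have key : ∀ v : S', ‖F (x * v) - G v‖ ≤ ε / 4 := fun v => by
      have h1 : (lTransB x F - G) v = F (x * v) - G v := by
        simp [myLTransB_apply]
      calc ‖F (x * v) - G v‖ = ‖(lTransB x F - G) v‖ := by rw [h1]
        _ ≤ ‖lTransB x F - G‖ := BoundedContinuousFunction.norm_coe_le_norm _ _
        _ ≤ ε / 4 := le_of_lt hGx
    have hmid : ‖G u - G (uu y hy)‖ ≤ ε / 4 := by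
      have h2 := dist_le_pi_dist (Ψ u) (Ψ (uu y hy)) ⟨G, hG⟩
      rw [← dist_eq_norm]
      refine le_trans h2 ?_
      rw [hyΨ]
      exact le_of_lt hdy
    have heq : (rTransB u F - rTransB (uu y hy) F) x = F (x * u) - F (x * uu y hy) := by
      simp [myRTransB_apply]
    rw [heq]
    have hsplit : F (x * u) - F (x * uu y hy)
        = (F (x * u) - G u) + (G u - G (uu y hy)) + (G (uu y hy) - F (x * uu y hy)) := by ring
    rw [hsplit]
    refine le_trans (norm_add₃_le) ?_
    have h4 : ‖G (uu y hy) - F (x * uu y hy)‖ ≤ ε / 4 := by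
      rw [norm_sub_rev]; exact key (uu y hy)
    exact add_le_add (add_le_add (key u) hmid) h4
  linarith [hle]

end MyTB

/-- for a semitopological semigroup `S` with identity and `f ∈ AP(S)`,
the set `K_f`, the norm closure in `C(S)` of the convex hull of the right orbit
`{r_s f : s ∈ S}`, is norm-compact and invariant under right translations, and
`(s, g) ↦ r_s g` defines a left action of `S` on `K_f` which is nonexpansive, weakly
separately continuous, and weakly equicontinuous. -/
theorem ap_right_orbit_action_properties (S : Type*) [Monoid S] [TopologicalSpace S]
    [T2Space S] [SemitopoSemigroup S] (F : S →ᵇ ℂ) (hF : IsAPb F)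
    (Kf : Set (S →ᵇ ℂ))
    (hKf : Kf = closure (convexHull ℝ (Set.range fun s : S => rTransB s F))) :
    -- `K_f` is norm-compact
    IsCompact Kf ∧
    -- `K_f` is invariant under every right translation
    (∀ s : S, rTransB s '' Kf ⊆ Kf) ∧
    -- `(s, g) ↦ r_s g` is a left action: `r_{s'} (r_s g) = r_{s' s} g`
    (∀ s s' : S, ∀ g ∈ Kf, rTransB s' (rTransB s g) = rTransB (s' * s) g) ∧
    -- the action is nonexpansive
    (∀ s : S, ∀ g ∈ Kf, ∀ h ∈ Kf, ‖rTransB s g - rTransB s h‖ ≤ ‖g - h‖) ∧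
    -- for each `s`, the map `g ↦ r_s g` is weakly continuous on `K_f`
    (∀ s : S, @ContinuousOn _ _ (weakTop ℂ (S →ᵇ ℂ)) (weakTop ℂ (S →ᵇ ℂ)) (rTransB s) Kf) ∧
    -- for each `g ∈ K_f`, the map `s ↦ r_s g` is continuous into the weak topology
    (∀ g ∈ Kf, @Continuous S _ _ (weakTop ℂ (S →ᵇ ℂ)) fun s : S => rTransB s g) ∧
    -- the family `{g ↦ r_s g : s ∈ S}` is weakly equicontinuous on `K_f`
    (∀ g ∈ Kf, ∀ W ∈ @nhds _ (weakTop ℂ (S →ᵇ ℂ)) (0 : S →ᵇ ℂ),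
      ∃ U ∈ @nhdsWithin _ (weakTop ℂ (S →ᵇ ℂ)) g Kf,
        ∀ h ∈ U, ∀ s : S, rTransB s h - rTransB s g ∈ W) := by
  
  classical
  have hRorb : TotallyBounded (Set.range fun s : S => rTransB s F) :=
    myRightOrbit_totallyBounded F hF
  have hcomp : IsCompact Kf := by
    rw [hKf]
    exact TotallyBounded.isCompact_of_isClosed
      ((totallyBounded_convexHull.mpr hRorb).closure) isClosed_closure
  have hmaps : ∀ s : S, rTransB s '' Kf ⊆ Kf := by
    intro s
    rw [hKf]
    have h1 : rTransB s '' (Set.range fun u : S => rTransB u F)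
        ⊆ Set.range fun u : S => rTransB u F := by
      rintro _ ⟨_, ⟨u, rfl⟩, rfl⟩
      exact ⟨s * u, (myRTransB_comp u s F).symm⟩
    have h2 : rTransB s '' convexHull ℝ (Set.range fun u : S => rTransB u F)
        ⊆ convexHull ℝ (Set.range fun u : S => rTransB u F) := by
      have h3 := (myRTransL s).image_convexHull (Set.range fun u : S => rTransB u F)
      have h4 : (⇑(myRTransL s) : (S →ᵇ ℂ) → (S →ᵇ ℂ)) = rTransB s := rfl
      rw [h4] at h3
      rw [h3]
      exact convexHull_mono h1
    refine Set.Subset.trans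
      (image_closure_subset_closure_image (myContinuous_rTransB s)) ?_
    exact closure_mono h2
  have hlew : (inferInstance : TopologicalSpace (S →ᵇ ℂ)) ≤ weakTop ℂ (S →ᵇ ℂ) :=
    myNorm_le_weakTop ℂ _
  have ht2w : @T2Space (S →ᵇ ℂ) (weakTop ℂ (S →ᵇ ℂ)) := myWeakTop_t2
  have hnw : ∀ x : S →ᵇ ℂ, @nhdsWithin _ (weakTop ℂ (S →ᵇ ℂ)) x Kf = nhdsWithin x Kf :=
    myNhdsWithin_eq_of_compact _ (weakTop ℂ (S →ᵇ ℂ)) hlew ht2w hcomp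
  refine ⟨hcomp, hmaps, fun s s' g _ => myRTransB_comp s s' g,
    fun s g _ h _ => myNorm_rTransB_sub s g h, ?_, ?_, ?_⟩
  · -- weak continuity of each right translation on Kf
    intro s x hx
    show Filter.Tendsto (rTransB s) (@nhdsWithin _ (weakTop ℂ (S →ᵇ ℂ)) x Kf)
      (@nhds _ (weakTop ℂ (S →ᵇ ℂ)) (rTransB s x))
    rw [hnw x]
    exact Filter.Tendsto.mono_right
      ((myContinuous_rTransB s).continuousWithinAt) (nhds_mono hlew)
  · -- weak continuity of the orbit maps
    intro g hg
    have hinto : ∀ s : S, rTransB s g ∈ Kf := fun s => hmaps s ⟨g, hg, rfl⟩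
    have hpt : @Continuous S (S →ᵇ ℂ) _ (myPtTop S) fun s => rTransB s g := by
      show @Continuous S (S →ᵇ ℂ) _
        (TopologicalSpace.induced (fun F : S →ᵇ ℂ => (F : S → ℂ)) Pi.topologicalSpace)
        fun s => rTransB s g
      exact continuous_induced_rng.2
        (continuous_pi fun t => g.continuous.comp (SemitopoSemigroup.cont_left t))
    rw [@continuous_iff_continuousAt S _ _ (weakTop ℂ (S →ᵇ ℂ))]
    intro s₀
    have h1 : Filter.Tendsto (fun s => rTransB s g) (nhds s₀)
        (@nhdsWithin _ (myPtTop S) (rTransB s₀ g) Kf) :=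
      @tendsto_nhdsWithin_of_tendsto_nhds_of_eventually_within (S →ᵇ ℂ) S (myPtTop S)
        (rTransB s₀ g) (nhds s₀) Kf _
        (@Continuous.tendsto S _ _ (myPtTop S) _ hpt s₀)
        (Filter.Eventually.of_forall hinto)
    rw [myNhdsWithin_eq_of_compact _ (myPtTop S) (myNorm_le_ptTop S) (myPtTop_t2 S)
      hcomp (rTransB s₀ g)] at h1
    exact (h1.mono_right nhdsWithin_le_nhds).mono_right (nhds_mono hlew)
  · -- weak equicontinuity
    intro g hg W hW
    have hW' : W ∈ nhds (0 : S →ᵇ ℂ) := nhds_mono hlew hW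
    obtain ⟨ε, hε, hball⟩ := Metric.mem_nhds_iff.mp hW'
    refine ⟨Metric.ball g ε, ?_, ?_⟩
    · rw [hnw g]
      exact mem_nhdsWithin_of_mem_nhds (Metric.ball_mem_nhds g hε)
    · intro h hh s
      apply hball
      rw [Metric.mem_ball, dist_zero_right]
      have hh' : ‖h - g‖ < ε := by rwa [Metric.mem_ball, dist_eq_norm] at hh
      exact lt_of_le_of_lt (myNorm_rTransB_sub s h g) hh'
end
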